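/- For x = (x¹,…,x¹⁴) ∈ ℝ¹⁴ set the quaternions X¹ = x¹ + x⁶·i + x⁹·j + x¹⁰·k, X² = x² + x⁷·i + x¹¹·j + x¹²·k, X³ = x³ + x⁸·i + x¹³·j + x¹⁴·k, and let A(x) be the quaternion hermitian 3×3 matrix A(x) = [[x⁵ − √3·x⁴, √3·X³, √3·X²], [√3·conj(X³), x⁵ + √3·x⁴, √3·X¹], [√3·conj(X²), √3·conj(X¹), −2x⁵]]. Let Υ¹_{IJK} (I,J,K = 1,…,14) be the totally symmetric tensor defined by Υ¹_{IJK} x^I x^J x^K = (1/2)·det₁A(x), where det₁A = a₁₁a₂₂a₃₃ − a₁₂a₂₁a₃₃ − a₁₃a₂₂a₃₁ − a₁₁a₂₃a₃₂ + a₁₃(a₃₂a₂₁) + (a₁₂a₂₃)a₃₁ (a real number). Then Υ¹ satisfies: (i) Υ¹_{IJK} = Υ¹_{(IJK)}; (ii) Σ_J Υ¹_{IJJ} = 0; (iii) Σ_I (Υ¹_{JKI}Υ¹_{LMI} + Υ¹_{LJI}Υ¹_{KMI} + Υ¹_{KLI}Υ¹_{JMI}) = δ_{JK}δ_{LM} +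 δ_{LJ}δ_{KM} + δ_{KL}δ_{JM}. -/

import Mathlib

open scoped Quaternion

/-- The first real-valued Weierstrass determinant of a 3×3 hermitian quaternion matrix. -/
noncomputable def det1 (a : Fin 3 → Fin 3 → ℍ[ℝ]) : ℍ[ℝ] :=
  a 0 0 * a 1 1 * a 2 2 - a 0 1 * a 1 0 * a 2 2 - a 0 2 * a 1 1 * a 2 0
    - a 0 0 * a 1 2 * a 2 1 + a 0 2 * (a 2 1 * a 1 0) + (a 0 1 * a 1 2) * a 2 0

/-- The quaternion `X¹ = x¹ + x⁶ i + x⁹ j + x¹⁰ k`. -/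
def Xq1 (x : Fin 14 → ℝ) : ℍ[ℝ] := ⟨x 0, x 5, x 8, x 9⟩

/-- The quaternion `X² = x² + x⁷ i + x¹¹ j + x¹² k`. -/
def Xq2 (x : Fin 14 → ℝ) : ℍ[ℝ] := ⟨x 1, x 6, x 10, x 11⟩

/-- The quaternion `X³ = x³ + x⁸ i + x¹³ j + x¹⁴ k`. -/
def Xq3 (x : Fin 14 → ℝ) : ℍ[ℝ] := ⟨x 2, x 7, x 12, x 13⟩

/-- The generic quaternion hermitian trace-free 3×3 matrix parametrized by `x ∈ ℝ¹⁴`. -/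
noncomputable def A14 (x : Fin 14 → ℝ) : Fin 3 → Fin 3 → ℍ[ℝ] :=
  ![![((x 4 - Real.sqrt 3 * x 3 : ℝ) : ℍ[ℝ]),
     ((Real.sqrt 3 : ℝ) : ℍ[ℝ]) * Xq3 x,
     ((Real.sqrt 3 : ℝ) : ℍ[ℝ]) * Xq2 x],
   ![((Real.sqrt 3 : ℝ) : ℍ[ℝ]) * star (Xq3 x),
     ((x 4 + Real.sqrt 3 * x 3 : ℝ) : ℍ[ℝ]),
     ((Real.sqrt 3 : ℝ) : ℍ[ℝ]) * Xq1 x],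
   ![((Real.sqrt 3 : ℝ) : ℍ[ℝ]) * star (Xq2 x),
     ((Real.sqrt 3 : ℝ) : ℍ[ℝ]) * star (Xq1 x),
     ((-2 * x 4 : ℝ) : ℍ[ℝ])]]


noncomputable def Epoly (s : ℝ) (x : Fin 14 → ℝ) : ℝ :=
  (-3)*x 7*x 9*x 10*s + (3)*x 7*x 8*x 11*s + (3)*x 6*x 9*x 12*s + (-3)*x 6*x 8*x 13*s + (-3)*x 5*x 11*x 12*s + (3)*x 5*x 10*x 13*s + (3)*x 4*x 13^2 + (3)*x 4*x 12^2 + (-3/2)*x 4*x 11^2 + (-3/2)*x 4*x 10^2 + (-3/2)*x 4*x 9^2 + (-3/2)*x 4*x 8^2 + (3)*x 4*x 7^2 + (-3/2)*x 4*x 6^2 + (-3/2)*x 4*x 5^2 + (-1)*x 4^3 + (-3/2)*x 3*x 11^2*s + (-3/2)*x 3*x 10^2*s + (3/2)*x 3*x 9^2*s + (3/2)*x 3*x 8^2*s + (-3/2)*x 3*x 6^2*s + (3/2)*x 3*x 5^2*s + (3)*x 3^2*x 4 + (3)*x 2*x 9*x 11*s + (3)*x 2*x 8*x 10*s + (3)*x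 2*x 5*x 6*s + (3)*x 2^2*x 4 + (-3)*x 1*x 9*x 13*s + (-3)*x 1*x 8*x 12*s + (-3)*x 1*x 5*x 7*s + (-3/2)*x 1^2*x 4 + (-3/2)*x 1^2*x 3*s + (3)*x 0*x 11*x 13*s + (3)*x 0*x 10*x 12*s + (3)*x 0*x 6*x 7*s + (3)*x 0*x 1*x 2*s + (-3/2)*x 0^2*x 4 + (3/2)*x 0^2*x 3*s

noncomputable def gv (s : ℝ) : Fin 14 → (Fin 14 → ℝ) → ℝ
  | 0 => fun x => x 11*x 13*s + x 10*x 12*s + x 6*x 7*s + x 1*x 2*s + (-1)*x 0*x 4 + x 0*x 3*s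
  | 1 => fun x => (-1)*x 9*x 13*s + (-1)*x 8*x 12*s + (-1)*x 5*x 7*s + (-1)*x 1*x 4 + (-1)*x 1*x 3*s + x 0*x 2*s
  | 2 => fun x => x 9*x 11*s + x 8*x 10*s + x 5*x 6*s + (2)*x 2*x 4 + x 0*x 1*s
  | 3 => fun x => (-1/2)*x 11^2*s + (-1/2)*x 10^2*s + (1/2)*x 9^2*s + (1/2)*x 8^2*s + (-1/2)*x 6^2*s + (1/2)*x 5^2*s + (2)*x 3*x 4 + (-1/2)*x 1^2*s + (1/2)*x 0^2*s
  | 4 => fun x => x 13^2 + x 12^2 + (-1/2)*x 11^2 + (-1/2)*x 10^2 + (-1/2)*x 9^2 + (-1/2)*x 8^2 + x 7^2 + (-1/2)*x 6^2 + (-1/2)*x 5^2 + (-1)*x 4^2 + x 3^2 + x 2^2 + (-1/2)*x 1^2 + (-1/2)*x 0^2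
  | 5 => fun x => (-1)*x 11*x 12*s + x 10*x 13*s + (-1)*x 4*x 5 + x 3*x 5*s + x 2*x 6*s + (-1)*x 1*x 7*s
  | 6 => fun x => x 9*x 12*s + (-1)*x 8*x 13*s + (-1)*x 4*x 6 + (-1)*x 3*x 6*s + x 2*x 5*s + x 0*x 7*s
  | 7 => fun x => (-1)*x 9*x 10*s + x 8*x 11*s + (2)*x 4*x 7 + (-1)*x 1*x 5*s + x 0*x 6*s
  | 8 => fun x => x 7*x 11*s + (-1)*x 6*x 13*s + (-1)*x 4*x 8 + x 3*x 8*s + x 2*x 10*s + (-1)*x 1*x 12*s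
  | 9 => fun x => (-1)*x 7*x 10*s + x 6*x 12*s + (-1)*x 4*x 9 + x 3*x 9*s + x 2*x 11*s + (-1)*x 1*x 13*s
  | 10 => fun x => (-1)*x 7*x 9*s + x 5*x 13*s + (-1)*x 4*x 10 + (-1)*x 3*x 10*s + x 2*x 8*s + x 0*x 12*s
  | 11 => fun x => x 7*x 8*s + (-1)*x 5*x 12*s + (-1)*x 4*x 11 + (-1)*x 3*x 11*s + x 2*x 9*s + x 0*x 13*s
  | 12 => fun x => x 6*x 9*s + (-1)*x 5*x 11*s + (2)*x 4*x 12 + (-1)*x 1*x 8*s + x 0*x 10*s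
  | 13 => fun x => (-1)*x 6*x 8*s + x 5*x 10*s + (2)*x 4*x 13 + (-1)*x 1*x 9*s + x 0*x 11*s

theorem det1_re (x : Fin 14 → ℝ) :
    (det1 (A14 x)).re = 2 * Epoly (Real.sqrt 3) x := by
  have hs : Real.sqrt 3 * Real.sqrt 3 = 3 := Real.mul_self_sqrt (by norm_num)
  set s := Real.sqrt 3 with hsdef
  simp only [det1, A14, Epoly, Matrix.cons_val_zero, Matrix.cons_val_one,
    Matrix.head_cons, Matrix.cons_val_two, Matrix.tail_cons, Matrix.head_fin_const,
    Quaternion.re_mul, Quaternion.imI_mul, Quaternion.imJ_mul, Quaternion.imK_mul,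
    Quaternion.re_add, Quaternion.imI_add, Quaternion.imJ_add, Quaternion.imK_add,
    Quaternion.re_sub, Quaternion.imI_sub, Quaternion.imJ_sub, Quaternion.imK_sub,
    Quaternion.re_neg, Quaternion.imI_neg, Quaternion.imJ_neg, Quaternion.imK_neg,
    Quaternion.re_coe, Quaternion.imI_coe, Quaternion.imJ_coe, Quaternion.imK_coe,
    Quaternion.re_star, Quaternion.imI_star, Quaternion.imJ_star, Quaternion.imK_star]
  simp only [Xq1, Xq2, Xq3]
  linear_combination (2*((-1)*x 7*x 9*x 10*s + x 7*x 8*x 11*s + x 6*x 9*x 12*s + (-1)*x 6*x 8*x 13*s + (-1)*x 5*x 11*x 12*s + x 5*x 10*x 13*s + x 4*x 13^2 + x 4*x 12^2 + (-1/2)*x 4*x 11^2 + (-1/2)*x 4*x 10^2 + (-1/2)*x 4*x 9^2 + (-1/2)*x 4*x 8^2 + x 4*x 7^2 + (-1/2)*x 4*x 6^2 + (-1/2)*x 4*x 5^2 + (-1/2)*x 3*x 11^2*s + (-1/2)*x 3*x 10^2*s + (1/2)*x 3*x 9^2*s + (1/2)*x 3*x 8^2*s + (-1/2)*x 3*x 6^2*s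 + (1/2)*x 3*x 5^2*s + x 3^2*x 4 + x 2*x 9*x 11*s + x 2*x 8*x 10*s + x 2*x 5*x 6*s + x 2^2*x 4 + (-1)*x 1*x 9*x 13*s + (-1)*x 1*x 8*x 12*s + (-1)*x 1*x 5*x 7*s + (-1/2)*x 1^2*x 4 + (-1/2)*x 1^2*x 3*s + x 0*x 11*x 13*s + x 0*x 10*x 12*s + x 0*x 6*x 7*s + x 0*x 1*x 2*s + (-1/2)*x 0^2*x 4 + (1/2)*x 0^2*x 3*s)) * hs

def Tl (Υ : Fin 14 → Fin 14 → Fin 14 → ℝ) (x y z : Fin 14 → ℝ) : ℝ :=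
  ∑ I, ∑ J, ∑ K, Υ I J K * x I * y J * z K

section TlLemmas
variable (Υ : Fin 14 → Fin 14 → Fin 14 → ℝ)

theorem Tl_aff1 (x v y z : Fin 14 → ℝ) (c : ℝ) :
    Tl Υ (x + c • v) y z = Tl Υ x y z + c * Tl Υ v y z := by
  simp only [Tl, Pi.add_apply, Pi.smul_apply, smul_eq_mul, Finset.mul_sum,
    ← Finset.sum_add_distrib]
  exact Finset.sum_congr rfl fun I _ => Finset.sum_congr rfl fun J _ =>
    Finset.sum_congr rfl fun K _ => by ring

theorem Tl_aff2 (y x v z : Fin 14 → ℝ) (c : ℝ) :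
    Tl Υ y (x + c • v) z = Tl Υ y x z + c * Tl Υ y v z := by
  simp only [Tl, Pi.add_apply, Pi.smul_apply, smul_eq_mul, Finset.mul_sum,
    ← Finset.sum_add_distrib]
  exact Finset.sum_congr rfl fun I _ => Finset.sum_congr rfl fun J _ =>
    Finset.sum_congr rfl fun K _ => by ring

theorem Tl_aff3 (y z x v : Fin 14 → ℝ) (c : ℝ) :
    Tl Υ y z (x + c • v) = Tl Υ y z x + c * Tl Υ y z v := by
  simp only [Tl, Pi.add_apply, Pi.smul_apply, smul_eq_mul, Finset.mul_sum,
    ← Finset.sum_add_distrib]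
  exact Finset.sum_congr rfl fun I _ => Finset.sum_congr rfl fun J _ =>
    Finset.sum_congr rfl fun K _ => by ring

theorem Tl_sym12 (hsym1 : ∀ I J K, Υ I J K = Υ J I K) (x y z : Fin 14 → ℝ) :
    Tl Υ x y z = Tl Υ y x z := by
  rw [Tl, Finset.sum_comm]
  exact Finset.sum_congr rfl fun J _ => Finset.sum_congr rfl fun I _ =>
    Finset.sum_congr rfl fun K _ => by rw [hsym1 I J K]; ring

theorem Tl_sym23 (hsym2 : ∀ I J K, Υ I J K = Υ I K J) (x y z : Fin 14 → ℝ) :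
    Tl Υ x y z = Tl Υ x z y := by
  rw [Tl]
  refine Finset.sum_congr rfl fun I _ => ?_
  rw [Finset.sum_comm]
  exact Finset.sum_congr rfl fun K _ => Finset.sum_congr rfl fun J _ =>
    by rw [hsym2 I J K]; ring

theorem Tl_single (A B C : Fin 14) :
    Tl Υ (Pi.single A 1) (Pi.single B 1) (Pi.single C 1) = Υ A B C := by
  simp [Tl, Pi.single_apply, mul_ite, ite_mul, Finset.sum_ite_eq, Finset.sum_ite_eq']

theorem cub_aff (hsym1 : ∀ I J K, Υ I J K = Υ J I K)
    (hsym2 : ∀ I J K, Υ I J K = Υ I K J) (x v : Fin 14 → ℝ) (c : ℝ) :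
    Tl Υ (x + c • v) (x + c • v) (x + c • v)
      = Tl Υ x x x + 3*c*Tl Υ x x v + 3*c^2*Tl Υ x v v + c^3*Tl Υ v v v := by
  simp only [Tl_aff1, Tl_aff2, Tl_aff3]
  rw [Tl_sym23 Υ hsym2 v v x, Tl_sym12 Υ hsym1 v x v, Tl_sym12 Υ hsym1 v x x,
    Tl_sym23 Υ hsym2 x v x]
  ring

end TlLemmas

theorem sum_poly2 (p q r : Fin 14 → ℝ) (t : ℝ) :
    ∑ I, (p I + t * q I + t^2 * r I)
      = (∑ I, p I) + t * (∑ I, q I) + t^2 * (∑ I, r I) := by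
  simp only [Finset.sum_add_distrib, Finset.mul_sum]

theorem sum_poly4 (p q r u w : Fin 14 → ℝ) (t : ℝ) :
    ∑ I, (p I + t * q I + t^2 * r I + t^3 * u I + t^4 * w I)
      = (∑ I, p I) + t * (∑ I, q I) + t^2 * (∑ I, r I)
        + t^3 * (∑ I, u I) + t^4 * (∑ I, w I) := by
  simp only [Finset.sum_add_distrib, Finset.mul_sum]

theorem single_dot (J K : Fin 14) :
    ∑ i, (Pi.single J 1 : Fin 14 → ℝ) i * (Pi.single K 1 : Fin 14 → ℝ) i
      = if J = K then (1:ℝ) else 0 := by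
  rcases eq_or_ne J K with h | h
  · subst h; rw [if_pos rfl]; simp [Pi.single_apply]
  · rw [if_neg h]
    apply Finset.sum_eq_zero
    intro i _
    rcases eq_or_ne i J with h2 | h2
    · subst h2; simp [Pi.single_apply, h]
    · simp [Pi.single_apply, h2]

theorem single_dotv (J : Fin 14) (b : Fin 14 → ℝ) :
    ∑ i, (Pi.single J 1 : Fin 14 → ℝ) i * b i = b J := by
  simp [Pi.single_apply, ite_mul, Finset.sum_ite_eq', Finset.mem_univ]

theorem hsum14 (f : Fin 14 → ℝ) :
    ∑ i, f i = f 0 + f 1 + f 2 + f 3 + f 4 + f 5 + f 6 + f 7 + f 8 + f 9 + f 10 + f 11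
      + f 12 + f 13 := by
  simp [Fin.sum_univ_succ, Fin.succ]
  ring

theorem sum_poly1 (p q : Fin 14 → ℝ) (t : ℝ) :
    ∑ I, (p I + t * q I) = (∑ I, p I) + t * (∑ I, q I) := by
  simp only [Finset.sum_add_distrib, Finset.mul_sum]

theorem single_sq (J : Fin 14) : ∑ i, ((Pi.single J 1 : Fin 14 → ℝ) i)^2 = 1 := by
  have e : ∀ i : Fin 14, ((Pi.single J 1 : Fin 14 → ℝ) i)^2
      = (Pi.single J 1 : Fin 14 → ℝ) i * (Pi.single J 1 : Fin 14 → ℝ) i := fun i => pow_two _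
  rw [Finset.sum_congr rfl fun i _ => e i, single_dot J J, if_pos rfl]

theorem single_dot2 (J K : Fin 14) :
    ∑ i, 2*((Pi.single J 1 : Fin 14 → ℝ) i * (Pi.single K 1 : Fin 14 → ℝ) i)
      = 2*(if J = K then (1:ℝ) else 0) := by
  rw [← Finset.mul_sum, single_dot]

theorem single_dotv2 (J : Fin 14) (b : Fin 14 → ℝ) :
    ∑ i, 2*((Pi.single J 1 : Fin 14 → ℝ) i * b i) = 2*(b J) := by
  rw [← Finset.mul_sum, single_dotv]

theorem singleP (L M P : Fin 14) (t : ℝ) :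
    ((Pi.single L 1 : Fin 14 → ℝ) + t • (Pi.single M 1 : Fin 14 → ℝ)) P
      = (if P = L then (1:ℝ) else 0) + t * (if P = M then (1:ℝ) else 0) := by
  rcases eq_or_ne P L with h | h <;> rcases eq_or_ne P M with h2 | h2 <;>
    simp [Pi.single_apply, h, h2]


set_option maxHeartbeats 4000000 in
/-- The totally symmetric tensor `Υ¹` on `ℝ¹⁴` with `Υ¹_{IJK}x^Ix^Jx^K = ½ det₁ A(x)`
satisfies total symmetry (i), trace-freeness (ii), and the quadratic identity (iii). -/
theorem statement4 (Υ : Fin 14 → Fin 14 → Fin 14 → ℝ)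
    (hsym1 : ∀ I J K, Υ I J K = Υ J I K)
    (hsym2 : ∀ I J K, Υ I J K = Υ I K J)
    (hdef : ∀ x : Fin 14 → ℝ,
      ((∑ I, ∑ J, ∑ K, Υ I J K * x I * x J * x K : ℝ) : ℍ[ℝ]) =
        ((1 / 2 : ℝ) : ℍ[ℝ]) * det1 (A14 x)) :
    ((∀ I J K, Υ I J K = Υ J I K) ∧ (∀ I J K, Υ I J K = Υ I K J)) ∧
    (∀ I, ∑ J, Υ I J J = 0) ∧
    (∀ J K L M, (∑ I, (Υ J K I * Υ L M I + Υ L J I * Υ K M I + Υ K L I * Υ J M I)) =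
      (if J = K then (1 : ℝ) else 0) * (if L = M then (1 : ℝ) else 0)
      + (if L = J then (1 : ℝ) else 0) * (if K = M then (1 : ℝ) else 0)
      + (if K = L then (1 : ℝ) else 0) * (if J = M then (1 : ℝ) else 0)) := by
  have hs3 : Real.sqrt 3 * Real.sqrt 3 = 3 := Real.mul_self_sqrt (by norm_num)
  have hcub : ∀ x : Fin 14 → ℝ, Tl Υ x x x = Epoly (Real.sqrt 3) x := by
    intro x
    have h := congrArg QuaternionAlgebra.re (hdef x)
    simp only [Quaternion.re_coe, Quaternion.re_mul, Quaternion.imI_coe, Quaternion.imJ_coe,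
      Quaternion.imK_coe, zero_mul, mul_zero, sub_zero, neg_zero, det1_re x] at h
    rw [Tl]
    linear_combination h
  have hFval : ∀ (I : Fin 14) (x : Fin 14 → ℝ),
      Tl Υ x x (Pi.single I 1) = gv (Real.sqrt 3) I x := by
    intro I x
    have h1 := cub_aff Υ hsym1 hsym2 x (Pi.single I 1) 1
    have h2 := cub_aff Υ hsym1 hsym2 x (Pi.single I 1) (-1)
    simp only [hcub] at h1 h2
    fin_cases I <;>
      (simp [gv, Epoly, Pi.single_apply] at h1 h2 ⊢; linear_combination (h2 - h1) / 6)
  refine ⟨⟨hsym1, hsym2⟩, ?_, ?_⟩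
  · intro I
    have key : ∀ J : Fin 14, Υ I J J = gv (Real.sqrt 3) I (Pi.single J 1) := by
      intro J
      calc Υ I J J = Tl Υ (Pi.single I 1) (Pi.single J 1) (Pi.single J 1) :=
            (Tl_single Υ I J J).symm
        _ = Tl Υ (Pi.single J 1) (Pi.single I 1) (Pi.single J 1) := Tl_sym12 Υ hsym1 _ _ _
        _ = Tl Υ (Pi.single J 1) (Pi.single J 1) (Pi.single I 1) := Tl_sym23 Υ hsym2 _ _ _
        _ = gv (Real.sqrt 3) I (Pi.single J 1) := hFval I _
    rw [Finset.sum_congr rfl fun J _ => key J]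
    fin_cases I <;>
      (simp [gv, Fin.sum_univ_succ, Fin.succ, Pi.single_apply] <;> ring_nf)
  · have hQ : ∀ x : Fin 14 → ℝ,
        (∑ I, (Tl Υ x x (Pi.single I 1))^2) = (∑ i, (x i)^2)^2 := by
      intro x
      have e1 : ∀ I : Fin 14, (Tl Υ x x (Pi.single I 1))^2 = (gv (Real.sqrt 3) I x)^2 :=
        fun I => by rw [hFval]
      rw [Finset.sum_congr rfl fun I _ => e1 I, hsum14 (fun I => (gv (Real.sqrt 3) I x)^2),
        hsum14 (fun i => (x i)^2)]
      simp only [gv]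
      linear_combination (x 11^2*x 13^2 + x 11^2*x 12^2 + (1/4)*x 11^4 + x 10^2*x 13^2 + x 10^2*x 12^2 + (1/2)*x 10^2*x 11^2 + (1/4)*x 10^4 + x 9^2*x 13^2 + x 9^2*x 12^2 + (1/2)*x 9^2*x 11^2 + (1/2)*x 9^2*x 10^2 + (1/4)*x 9^4 + x 8^2*x 13^2 + x 8^2*x 12^2 + (1/2)*x 8^2*x 11^2 + (1/2)*x 8^2*x 10^2 + (1/2)*x 8^2*x 9^2 + (1/4)*x 8^4 + x 7^2*x 11^2 + x 7^2*x 10^2 + x 7^2*x 9^2 + x 7^2*x 8^2 + x 6^2*x 13^2 + x 6^2*x 12^2 + (1/2)*x 6^2*x 11^2 + (1/2)*x 6^2*x 10^2 + (1/2)*x 6^2*x 9^2 + (1/2)*x 6^2*x 8^2 + x 6^2*x 7^2 + (1/4)*x 6^4 + x 5^2*x 13^2 + x 5^2*x 12^2 + (1/2)*x 5^2*x 11^2 + (1/2)*x 5^2*x 10^2 + (1/2)*x 5^2*x 9^2 + (1/2)*x 5^2*x 8^2 + x 5^2*x 7^2 + (1/2)*x 5^2*x 6^2 + (1/4)*x 5^4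 + x 3^2*x 11^2 + x 3^2*x 10^2 + x 3^2*x 9^2 + x 3^2*x 8^2 + x 3^2*x 6^2 + x 3^2*x 5^2 + x 2^2*x 11^2 + x 2^2*x 10^2 + x 2^2*x 9^2 + x 2^2*x 8^2 + x 2^2*x 6^2 + x 2^2*x 5^2 + x 1^2*x 13^2 + x 1^2*x 12^2 + (1/2)*x 1^2*x 11^2 + (1/2)*x 1^2*x 10^2 + (1/2)*x 1^2*x 9^2 + (1/2)*x 1^2*x 8^2 + x 1^2*x 7^2 + (1/2)*x 1^2*x 6^2 + (1/2)*x 1^2*x 5^2 + x 1^2*x 3^2 + x 1^2*x 2^2 + (1/4)*x 1^4 + x 0^2*x 13^2 + x 0^2*x 12^2 + (1/2)*x 0^2*x 11^2 + (1/2)*x 0^2*x 10^2 + (1/2)*x 0^2*x 9^2 + (1/2)*x 0^2*x 8^2 + x 0^2*x 7^2 + (1/2)*x 0^2*x 6^2 + (1/2)*x 0^2*x 5^2 + x 0^2*x 3^2 + x 0^2*x 2^2 + (1/2)*x 0^2*x 1^2 + (1/4)*x 0^4) * hs3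
    have SA : ∀ a b : Fin 14 → ℝ,
        (∑ I, (2*(Tl Υ (a) (a) (Pi.single I 1) * Tl Υ (b) (b) (Pi.single I 1)) + 4*(Tl Υ (a) (b) (Pi.single I 1))^2))
        = 2*((∑ i, (a i)^2) * (∑ i, (b i)^2)) + (∑ i, 2*(a i * b i))^2 := by
      intro a b
      have hq : ∀ (t : ℝ) (z : Fin 14 → ℝ), Tl Υ (a + t • b) (a + t • b) z
          = Tl Υ a a z + 2*t*(Tl Υ a b z) + t^2 * Tl Υ b b z := by
        intro t z
        rw [Tl_aff1, Tl_aff2, Tl_aff2, Tl_sym12 Υ hsym1 b a z]; ring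
      have hexp : ∀ t : ℝ,
          (∑ I, (Tl Υ (a) (a) (Pi.single I 1))^2)
          + t * (∑ I, 4*(Tl Υ (a) (a) (Pi.single I 1) * Tl Υ (a) (b) (Pi.single I 1)))
          + t^2 * (∑ I, (2*(Tl Υ (a) (a) (Pi.single I 1) * Tl Υ (b) (b) (Pi.single I 1)) + 4*(Tl Υ (a) (b) (Pi.single I 1))^2))
          + t^3 * (∑ I, 4*(Tl Υ (a) (b) (Pi.single I 1) * Tl Υ (b) (b) (Pi.single I 1)))
          + t^4 * (∑ I, (Tl Υ (b) (b) (Pi.single I 1))^2)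
          = ((∑ i, (a i)^2) + t * (∑ i, 2*(a i * b i)) + t^2 * (∑ i, (b i)^2))^2 := by
        intro t
        have h := hQ (a + t • b)
        have e1 : ∀ I : Fin 14, (Tl Υ (a + t • b) (a + t • b) (Pi.single I 1))^2
            = (Tl Υ (a) (a) (Pi.single I 1))^2
              + t * (4*(Tl Υ (a) (a) (Pi.single I 1) * Tl Υ (a) (b) (Pi.single I 1)))
              + t^2 * (2*(Tl Υ (a) (a) (Pi.single I 1) * Tl Υ (b) (b) (Pi.single I 1)) + 4*(Tl Υ (a) (b) (Pi.single I 1))^2)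
              + t^3 * (4*(Tl Υ (a) (b) (Pi.single I 1) * Tl Υ (b) (b) (Pi.single I 1)))
              + t^4 * ((Tl Υ (b) (b) (Pi.single I 1))^2) := by
          intro I; rw [hq t]; ring
        rw [Finset.sum_congr rfl fun I _ => e1 I,
          sum_poly4 (fun I => (Tl Υ (a) (a) (Pi.single I 1))^2)
            (fun I => 4*(Tl Υ (a) (a) (Pi.single I 1) * Tl Υ (a) (b) (Pi.single I 1)))
            (fun I => 2*(Tl Υ (a) (a) (Pi.single I 1) * Tl Υ (b) (b) (Pi.single I 1)) + 4*(Tl Υ (a) (b) (Pi.single I 1))^2)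
            (fun I => 4*(Tl Υ (a) (b) (Pi.single I 1) * Tl Υ (b) (b) (Pi.single I 1)))
            (fun I => (Tl Υ (b) (b) (Pi.single I 1))^2) t] at h
        have e2 : ∀ i : Fin 14, ((a + t • b) i)^2
            = (a i)^2 + t * (2*(a i * b i)) + t^2 * ((b i)^2) := by
          intro i; simp only [Pi.add_apply, Pi.smul_apply, smul_eq_mul]; ring
        rw [Finset.sum_congr rfl fun i _ => e2 i,
          sum_poly2 (fun i => (a i)^2) (fun i => 2*(a i * b i)) (fun i => (b i)^2) t] at h
        linear_combination h
      have h0 := hexp 0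
      have h1 := hexp 1
      have hm1 := hexp (-1)
      have h2 := hexp 2
      have hm2 := hexp (-2)
      linear_combination (16*(h1 + hm1) - (h2 + hm2) - 30*h0) / 24
    have SB : ∀ (J K : Fin 14) (b : Fin 14 → ℝ),
        (∑ I, (4*(Tl Υ (Pi.single J 1) (Pi.single K 1) (Pi.single I 1) * Tl Υ (b) (b) (Pi.single I 1)) + 8*(Tl Υ (Pi.single J 1) (b) (Pi.single I 1) * Tl Υ (Pi.single K 1) (b) (Pi.single I 1))))
        = 4*((if J = K then (1:ℝ) else 0) * (∑ i, (b i)^2)) + 2*((2*(b J)) * (2*(b K))) := by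
      intro J K b
      have hq2 : ∀ (t : ℝ) (z : Fin 14 → ℝ),
          Tl Υ ((Pi.single J 1 : Fin 14 → ℝ) + t • (Pi.single K 1 : Fin 14 → ℝ)) ((Pi.single J 1 : Fin 14 → ℝ) + t • (Pi.single K 1 : Fin 14 → ℝ)) z
          = Tl Υ (Pi.single J 1) (Pi.single J 1) z + 2*t*(Tl Υ (Pi.single J 1) (Pi.single K 1) z) + t^2 * Tl Υ (Pi.single K 1) (Pi.single K 1) z := by
        intro t z
        rw [Tl_aff1, Tl_aff2, Tl_aff2, Tl_sym12 Υ hsym1 (Pi.single K 1) (Pi.single J 1) z]; ring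
      have hexp : ∀ t : ℝ,
          (∑ I, (2*(Tl Υ (Pi.single J 1) (Pi.single J 1) (Pi.single I 1) * Tl Υ (b) (b) (Pi.single I 1)) + 4*(Tl Υ (Pi.single J 1) (b) (Pi.single I 1))^2))
          + t * (∑ I, (4*(Tl Υ (Pi.single J 1) (Pi.single K 1) (Pi.single I 1) * Tl Υ (b) (b) (Pi.single I 1)) + 8*(Tl Υ (Pi.single J 1) (b) (Pi.single I 1) * Tl Υ (Pi.single K 1) (b) (Pi.single I 1))))
          + t^2 * (∑ I, (2*(Tl Υ (Pi.single K 1) (Pi.single K 1) (Pi.single I 1) * Tl Υ (b) (b) (Pi.single I 1)) + 4*(Tl Υ (Pi.single K 1) (b) (Pi.single I 1))^2))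
          = 2*((1 + t * (2*(if J = K then (1:ℝ) else 0)) + t^2 * 1) * (∑ i, (b i)^2))
            + ((2*(b J)) + t * (2*(b K)))^2 := by
        intro t
        have h := SA ((Pi.single J 1 : Fin 14 → ℝ) + t • (Pi.single K 1 : Fin 14 → ℝ)) b
        have e1 : ∀ I : Fin 14,
            (2*(Tl Υ ((Pi.single J 1 : Fin 14 → ℝ) + t • (Pi.single K 1 : Fin 14 → ℝ)) ((Pi.single J 1 : Fin 14 → ℝ) + t • (Pi.single K 1 : Fin 14 → ℝ)) (Pi.single I 1) * Tl Υ (b) (b) (Pi.single I 1))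
              + 4*(Tl Υ ((Pi.single J 1 : Fin 14 → ℝ) + t • (Pi.single K 1 : Fin 14 → ℝ)) b (Pi.single I 1))^2)
            = (2*(Tl Υ (Pi.single J 1) (Pi.single J 1) (Pi.single I 1) * Tl Υ (b) (b) (Pi.single I 1)) + 4*(Tl Υ (Pi.single J 1) (b) (Pi.single I 1))^2)
              + t * (4*(Tl Υ (Pi.single J 1) (Pi.single K 1) (Pi.single I 1) * Tl Υ (b) (b) (Pi.single I 1)) + 8*(Tl Υ (Pi.single J 1) (b) (Pi.single I 1) * Tl Υ (Pi.single K 1) (b) (Pi.single I 1)))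
              + t^2 * (2*(Tl Υ (Pi.single K 1) (Pi.single K 1) (Pi.single I 1) * Tl Υ (b) (b) (Pi.single I 1)) + 4*(Tl Υ (Pi.single K 1) (b) (Pi.single I 1))^2) := by
          intro I
          rw [hq2 t, Tl_aff1 Υ (Pi.single J 1) (Pi.single K 1) b (Pi.single I 1) t]; ring
        rw [Finset.sum_congr rfl fun I _ => e1 I,
          sum_poly2 (fun I => 2*(Tl Υ (Pi.single J 1) (Pi.single J 1) (Pi.single I 1) * Tl Υ (b) (b) (Pi.single I 1)) + 4*(Tl Υ (Pi.single J 1) (b) (Pi.single I 1))^2)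
            (fun I => 4*(Tl Υ (Pi.single J 1) (Pi.single K 1) (Pi.single I 1) * Tl Υ (b) (b) (Pi.single I 1)) + 8*(Tl Υ (Pi.single J 1) (b) (Pi.single I 1) * Tl Υ (Pi.single K 1) (b) (Pi.single I 1)))
            (fun I => 2*(Tl Υ (Pi.single K 1) (Pi.single K 1) (Pi.single I 1) * Tl Υ (b) (b) (Pi.single I 1)) + 4*(Tl Υ (Pi.single K 1) (b) (Pi.single I 1))^2) t] at h
        have e2 : ∀ i : Fin 14, (((Pi.single J 1 : Fin 14 → ℝ) + t • (Pi.single K 1 : Fin 14 → ℝ)) i)^2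
            = ((Pi.single J 1 : Fin 14 → ℝ) i)^2
              + t * (2*((Pi.single J 1 : Fin 14 → ℝ) i * (Pi.single K 1 : Fin 14 → ℝ) i))
              + t^2 * (((Pi.single K 1 : Fin 14 → ℝ) i)^2) := by
          intro i; simp only [Pi.add_apply, Pi.smul_apply, smul_eq_mul]; ring
        have e3 : ∀ i : Fin 14, 2*(((Pi.single J 1 : Fin 14 → ℝ) + t • (Pi.single K 1 : Fin 14 → ℝ)) i * b i)
            = (2*((Pi.single J 1 : Fin 14 → ℝ) i * b i))
              + t * (2*((Pi.single K 1 : Fin 14 → ℝ) i * b i)) := by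
          intro i; simp only [Pi.add_apply, Pi.smul_apply, smul_eq_mul]; ring
        rw [Finset.sum_congr rfl fun i _ => e2 i,
          sum_poly2 (fun i => ((Pi.single J 1 : Fin 14 → ℝ) i)^2)
            (fun i => 2*((Pi.single J 1 : Fin 14 → ℝ) i * (Pi.single K 1 : Fin 14 → ℝ) i))
            (fun i => ((Pi.single K 1 : Fin 14 → ℝ) i)^2) t,
          Finset.sum_congr rfl fun i _ => e3 i,
          sum_poly1 (fun i => 2*((Pi.single J 1 : Fin 14 → ℝ) i * b i))
            (fun i => 2*((Pi.single K 1 : Fin 14 → ℝ) i * b i)) t,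
          single_sq J, single_sq K, single_dot2 J K, single_dotv2 J b, single_dotv2 K b] at h
        linear_combination h
      have h1 := hexp 1
      have hm1 := hexp (-1)
      linear_combination (h1 - hm1) / 2
    have SC : ∀ J K L M : Fin 14,
        (∑ I, (8*(Tl Υ (Pi.single J 1) (Pi.single K 1) (Pi.single I 1) * Tl Υ (Pi.single L 1) (Pi.single M 1) (Pi.single I 1)) + 8*(Tl Υ (Pi.single J 1) (Pi.single L 1) (Pi.single I 1) * Tl Υ (Pi.single K 1) (Pi.single M 1) (Pi.single I 1) + Tl Υ (Pi.single J 1) (Pi.single M 1) (Pi.single I 1) * Tl Υ (Pi.single K 1) (Pi.single L 1) (Pi.single I 1))))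
        = 8*((if J = K then (1:ℝ) else 0) * (if L = M then (1:ℝ) else 0)) + 8*((if J = L then (1:ℝ) else 0) * (if K = M then (1:ℝ) else 0) + (if J = M then (1:ℝ) else 0) * (if K = L then (1:ℝ) else 0)) := by
      intro J K L M
      have hqLM : ∀ (t : ℝ) (z : Fin 14 → ℝ),
          Tl Υ ((Pi.single L 1 : Fin 14 → ℝ) + t • (Pi.single M 1 : Fin 14 → ℝ)) ((Pi.single L 1 : Fin 14 → ℝ) + t • (Pi.single M 1 : Fin 14 → ℝ)) z
          = Tl Υ (Pi.single L 1) (Pi.single L 1) z + 2*t*(Tl Υ (Pi.single L 1) (Pi.single M 1) z) + t^2 * Tl Υ (Pi.single M 1) (Pi.single M 1) z := by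
        intro t z
        rw [Tl_aff1, Tl_aff2, Tl_aff2, Tl_sym12 Υ hsym1 (Pi.single M 1) (Pi.single L 1) z]; ring
      have hexp : ∀ t : ℝ,
          (∑ I, (4*(Tl Υ (Pi.single J 1) (Pi.single K 1) (Pi.single I 1) * Tl Υ (Pi.single L 1) (Pi.single L 1) (Pi.single I 1)) + 8*(Tl Υ (Pi.single J 1) (Pi.single L 1) (Pi.single I 1) * Tl Υ (Pi.single K 1) (Pi.single L 1) (Pi.single I 1))))
          + t * (∑ I, (8*(Tl Υ (Pi.single J 1) (Pi.single K 1) (Pi.single I 1) * Tl Υ (Pi.single L 1) (Pi.single M 1) (Pi.single I 1)) + 8*(Tl Υ (Pi.single J 1) (Pi.single L 1) (Pi.single I 1) * Tl Υ (Pi.single K 1) (Pi.single M 1) (Pi.single I 1) + Tl Υ (Pi.single J 1) (Pi.single M 1) (Pi.single I 1) * Tl Υ (Pi.single K 1) (Pi.single L 1) (Pi.single I 1))))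
          + t^2 * (∑ I, (4*(Tl Υ (Pi.single J 1) (Pi.single K 1) (Pi.single I 1) * Tl Υ (Pi.single M 1) (Pi.single M 1) (Pi.single I 1)) + 8*(Tl Υ (Pi.single J 1) (Pi.single M 1) (Pi.single I 1) * Tl Υ (Pi.single K 1) (Pi.single M 1) (Pi.single I 1))))
          = 4*((if J = K then (1:ℝ) else 0) * (1 + t * (2*(if L = M then (1:ℝ) else 0)) + t^2 * 1))
            + 2*((2*((if J = L then (1:ℝ) else 0) + t * (if J = M then (1:ℝ) else 0))) * (2*((if K = L then (1:ℝ) else 0) + t * (if K = M then (1:ℝ) else 0)))) := by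
        intro t
        have h := SB J K ((Pi.single L 1 : Fin 14 → ℝ) + t • (Pi.single M 1 : Fin 14 → ℝ))
        have e1 : ∀ I : Fin 14,
            (4*(Tl Υ (Pi.single J 1) (Pi.single K 1) (Pi.single I 1) * Tl Υ ((Pi.single L 1 : Fin 14 → ℝ) + t • (Pi.single M 1 : Fin 14 → ℝ)) ((Pi.single L 1 : Fin 14 → ℝ) + t • (Pi.single M 1 : Fin 14 → ℝ)) (Pi.single I 1))
              + 8*(Tl Υ (Pi.single J 1) ((Pi.single L 1 : Fin 14 → ℝ) + t • (Pi.single M 1 : Fin 14 → ℝ)) (Pi.single I 1)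
                * Tl Υ (Pi.single K 1) ((Pi.single L 1 : Fin 14 → ℝ) + t • (Pi.single M 1 : Fin 14 → ℝ)) (Pi.single I 1)))
            = (4*(Tl Υ (Pi.single J 1) (Pi.single K 1) (Pi.single I 1) * Tl Υ (Pi.single L 1) (Pi.single L 1) (Pi.single I 1)) + 8*(Tl Υ (Pi.single J 1) (Pi.single L 1) (Pi.single I 1) * Tl Υ (Pi.single K 1) (Pi.single L 1) (Pi.single I 1)))
              + t * (8*(Tl Υ (Pi.single J 1) (Pi.single K 1) (Pi.single I 1) * Tl Υ (Pi.single L 1) (Pi.single M 1) (Pi.single I 1)) + 8*(Tl Υ (Pi.single J 1) (Pi.single L 1) (Pi.single I 1) * Tl Υ (Pi.single K 1) (Pi.single M 1) (Pi.single I 1) + Tl Υ (Pi.single J 1) (Pi.single M 1) (Pi.single I 1) * Tl Υ (Pi.single K 1) (Pi.single L 1) (Pi.single I 1)))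
              + t^2 * (4*(Tl Υ (Pi.single J 1) (Pi.single K 1) (Pi.single I 1) * Tl Υ (Pi.single M 1) (Pi.single M 1) (Pi.single I 1)) + 8*(Tl Υ (Pi.single J 1) (Pi.single M 1) (Pi.single I 1) * Tl Υ (Pi.single K 1) (Pi.single M 1) (Pi.single I 1))) := by
          intro I
          rw [hqLM t, Tl_aff2 Υ (Pi.single J 1) (Pi.single L 1) (Pi.single M 1) (Pi.single I 1) t,
            Tl_aff2 Υ (Pi.single K 1) (Pi.single L 1) (Pi.single M 1) (Pi.single I 1) t]
          ring
        rw [Finset.sum_congr rfl fun I _ => e1 I,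
          sum_poly2 (fun I => 4*(Tl Υ (Pi.single J 1) (Pi.single K 1) (Pi.single I 1) * Tl Υ (Pi.single L 1) (Pi.single L 1) (Pi.single I 1)) + 8*(Tl Υ (Pi.single J 1) (Pi.single L 1) (Pi.single I 1) * Tl Υ (Pi.single K 1) (Pi.single L 1) (Pi.single I 1)))
            (fun I => 8*(Tl Υ (Pi.single J 1) (Pi.single K 1) (Pi.single I 1) * Tl Υ (Pi.single L 1) (Pi.single M 1) (Pi.single I 1)) + 8*(Tl Υ (Pi.single J 1) (Pi.single L 1) (Pi.single I 1) * Tl Υ (Pi.single K 1) (Pi.single M 1) (Pi.single I 1) + Tl Υ (Pi.single J 1) (Pi.single M 1) (Pi.single I 1) * Tl Υ (Pi.single K 1) (Pi.single L 1) (Pi.single I 1)))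
            (fun I => 4*(Tl Υ (Pi.single J 1) (Pi.single K 1) (Pi.single I 1) * Tl Υ (Pi.single M 1) (Pi.single M 1) (Pi.single I 1)) + 8*(Tl Υ (Pi.single J 1) (Pi.single M 1) (Pi.single I 1) * Tl Υ (Pi.single K 1) (Pi.single M 1) (Pi.single I 1))) t] at h
        have e2 : ∀ i : Fin 14, (((Pi.single L 1 : Fin 14 → ℝ) + t • (Pi.single M 1 : Fin 14 → ℝ)) i)^2
            = ((Pi.single L 1 : Fin 14 → ℝ) i)^2
              + t * (2*((Pi.single L 1 : Fin 14 → ℝ) i * (Pi.single M 1 : Fin 14 → ℝ) i))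
              + t^2 * (((Pi.single M 1 : Fin 14 → ℝ) i)^2) := by
          intro i; simp only [Pi.add_apply, Pi.smul_apply, smul_eq_mul]; ring
        rw [Finset.sum_congr rfl fun i _ => e2 i,
          sum_poly2 (fun i => ((Pi.single L 1 : Fin 14 → ℝ) i)^2)
            (fun i => 2*((Pi.single L 1 : Fin 14 → ℝ) i * (Pi.single M 1 : Fin 14 → ℝ) i))
            (fun i => ((Pi.single M 1 : Fin 14 → ℝ) i)^2) t,
          single_sq L, single_sq M, single_dot2 L M, singleP L M J t, singleP L M K t] at h
        linear_combination h
      have h1 := hexp 1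
      have hm1 := hexp (-1)
      linear_combination (h1 - hm1) / 2
    intro J K L M
    have conv : ∀ I : Fin 14,
        Υ J K I * Υ L M I + Υ L J I * Υ K M I + Υ K L I * Υ J M I
        = (1/8)*(8*(Tl Υ (Pi.single J 1) (Pi.single K 1) (Pi.single I 1) * Tl Υ (Pi.single L 1) (Pi.single M 1) (Pi.single I 1)) + 8*(Tl Υ (Pi.single J 1) (Pi.single L 1) (Pi.single I 1) * Tl Υ (Pi.single K 1) (Pi.single M 1) (Pi.single I 1) + Tl Υ (Pi.single J 1) (Pi.single M 1) (Pi.single I 1) * Tl Υ (Pi.single K 1) (Pi.single L 1) (Pi.single I 1))) := by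
      intro I
      simp only [Tl_single]
      rw [hsym1 L J I]
      ring
    rw [Finset.sum_congr rfl fun I _ => conv I, ← Finset.mul_sum, SC J K L M]
    have d1 : (if L = J then (1:ℝ) else 0) = (if J = L then (1:ℝ) else 0) := by
      rcases eq_or_ne L J with h | h
      · simp [h]
      · simp [h, Ne.symm h]
    rw [d1]
    ring
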